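/- arXiv:2304.07424 — 4 statements merged into one kernel-verified Lean document; each statement's English description precedes it below -/
import Mathlib

section
/- Let K be a compact subset of R^D with finite (D-d)-dimensional Hausdorff measure, 0 < d < D. Then there exists a constant C2 > 0 depending only on d and D such that for all sufficiently small ε > 0 the ε-parallel set K^{+ε} = ∪_{x∈K} B(x,ε) satisfies σ_D(K^{+ε}) ≥ C2 · ε^d · σ_{D-d}(K), where σ_D is the D-dimensional Lebesgue (Hausdorff) measure on R^D. -/
open MeasureTheory Metric Set
open scoped ENNReal NNReal

/-- Maximal `ε`-separated subset of a compact set: it is `ε`-separated and `ε`-dense. -/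
lemma exists_maximal_separated {E : Type*} [MetricSpace E] {K : Set E} (hK : IsCompact K)
    {ε : ℝ} (hε : 0 < ε) :
    ∃ t : Finset E, ↑t ⊆ K ∧ (∀ x ∈ t, ∀ y ∈ t, x ≠ y → ε < dist x y) ∧
      ∀ y ∈ K, ∃ x ∈ t, dist y x ≤ ε := by
  classical
  obtain ⟨s, hsfin, hscov⟩ := totallyBounded_iff.mp hK.totallyBounded (ε / 2) (by positivity)
  set P : Finset E → Prop := fun t => ↑t ⊆ K ∧ ∀ x ∈ t, ∀ y ∈ t, x ≠ y → ε < dist x y with hP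
  have hbound : ∀ t : Finset E, P t → t.card ≤ hsfin.toFinset.card := by
    intro t ht
    have hx : ∀ x ∈ t, ∃ c ∈ s, dist x c < ε / 2 := by
      intro x hxt
      have := hscov (ht.1 hxt)
      simp only [mem_iUnion, Metric.mem_ball] at this
      obtain ⟨c, hc, hd⟩ := this
      exact ⟨c, hc, hd⟩
    choose! f hf1 hf2 using hx
    apply Finset.card_le_card_of_injOn f (fun x hxt => hsfin.mem_toFinset.mpr (hf1 x hxt))
    intro x hxt y hyt hfxy
    by_contra hne
    have h1 := ht.2 x hxt y hyt hne
    have h2 : dist x y ≤ dist x (f x) + dist (f y) y := by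
      rw [hfxy]; exact dist_triangle x (f y) y
    have h3 := hf2 x hxt
    have h4 := hf2 y hyt
    rw [dist_comm (f y) y] at h2
    linarith
  set A : Set ℕ := {n | ∃ t : Finset E, P t ∧ t.card = n} with hA
  have hAne : A.Nonempty := ⟨0, ∅, ⟨by simp, by simp⟩, rfl⟩
  have hAbdd : BddAbove A := by
    refine ⟨hsfin.toFinset.card, ?_⟩
    rintro n ⟨t, ht, rfl⟩
    exact hbound t ht
  obtain ⟨t, hPt, hcard⟩ := Nat.sSup_mem hAne hAbdd
  refine ⟨t, hPt.1, hPt.2, ?_⟩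
  intro y hy
  by_contra h
  push_neg at h
  have hyt : y ∉ t := by
    intro hyt
    have := h y hyt
    simp only [dist_self] at this
    linarith
  have hPins : P (insert y t) := by
    constructor
    · rw [Finset.coe_insert]
      exact Set.insert_subset hy hPt.1
    · intro a ha b hb hab
      rcases Finset.mem_insert.mp ha with rfl | hat
      · rcases Finset.mem_insert.mp hb with rfl | hbt
        · exact absurd rfl hab
        · exact h b hbt
      · rcases Finset.mem_insert.mp hb with rfl | hbt
        · rw [dist_comm]; exact h a hat
        · exact hPt.2 a hat b hbt hab
  have hmem : t.card + 1 ∈ A := ⟨insert y t, hPins, by rw [Finset.card_insert_of_notMem hyt]⟩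
  have := le_csSup hAbdd hmem
  rw [hcard] at this
  omega

/-- volume of the `ε`-parallel set. For `K` compact in `ℝ^D` with
finite `(D-d)`-dimensional Hausdorff measure, `0 < d < D`, there is `C2 > 0`
depending only on `d, D` such that for all sufficiently small `ε > 0` the
closed `ε`-neighborhood `K^{+ε}` satisfies
`σ_D(K^{+ε}) ≥ C2 * ε^d * σ_{D-d}(K)`. -/
theorem stmt1 (D d : ℕ) (hd : 0 < d) (hdD : d < D) :
    ∃ C2 : ℝ, 0 < C2 ∧
      ∀ K : Set (EuclideanSpace ℝ (Fin D)), IsCompact K →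
        μH[(D - d : ℝ)] K < ⊤ →
        ∀ᶠ ε in nhdsWithin (0 : ℝ) (Set.Ioi 0),
          ENNReal.ofReal (C2 * ε ^ d) * μH[(D - d : ℝ)] K ≤
            volume (Metric.cthickening ε K) := by
  classical
  set s : ℝ := (D : ℝ) - d with hs_def
  have hs_pos : 0 < s := by
    simp only [hs_def, sub_pos]
    exact_mod_cast hdD
  set V : ℝ≥0∞ := volume (Metric.ball (0 : EuclideanSpace ℝ (Fin D)) 1) with hV_def
  have hV0 : 0 < V := measure_ball_pos volume 0 one_pos
  have hVtop : V ≠ ⊤ := measure_ball_lt_top.ne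
  set Vr : ℝ := V.toReal with hVr_def
  have hVr0 : 0 < Vr := ENNReal.toReal_pos hV0.ne' hVtop
  refine ⟨Vr / 2 ^ (2 * D + 1), by positivity, ?_⟩
  intro K hK hKfin
  by_cases hK0 : μH[s] K = 0
  · filter_upwards with ε
    rw [hK0, mul_zero]
    exact zero_le
  -- main case
  have hKpos : 0 < μH[s] K := pos_iff_ne_zero.mpr hK0
  have hhalf : μH[s] K / 2 < μH[s] K := ENNReal.half_lt_self hK0 hKfin.ne
  conv_rhs at hhalf => rw [Measure.hausdorffMeasure_apply]
  simp only [lt_iSup_iff] at hhalf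
  obtain ⟨r0, hr0pos, hI⟩ := hhalf
  -- choose c such that ε < c implies ofReal (2 ε) ≤ r0
  obtain ⟨c, hc0, hc⟩ : ∃ c : ℝ, 0 < c ∧ ENNReal.ofReal (2 * c) ≤ r0 := by
    rcases eq_or_ne r0 ⊤ with rfl | hr0top
    · exact ⟨1, one_pos, le_top⟩
    · have hrt : 0 < r0.toReal := ENNReal.toReal_pos hr0pos.ne' hr0top
      refine ⟨r0.toReal / 2, by positivity, ?_⟩
      rw [mul_div_cancel₀ _ (two_ne_zero), ENNReal.ofReal_toReal hr0top]
  filter_upwards [Ioo_mem_nhdsGT_of_mem (Set.left_mem_Ico.mpr hc0)] with ε hεIoo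
  obtain ⟨hε0, hεc⟩ := hεIoo
  obtain ⟨t, htK, htsep, htcov⟩ := exists_maximal_separated hK hε0
  set N := t.card with hN
  have hLlen : t.toList.length = N := Finset.length_toList t
  -- cover of K by closed balls of radius ε indexed by ℕ
  set u : ℕ → Set (EuclideanSpace ℝ (Fin D)) := fun n =>
    if h : n < t.toList.length then Metric.closedBall (t.toList.get ⟨n, h⟩) ε else ∅ with hu
  have hucov : K ⊆ ⋃ n, u n := by
    intro y hy
    obtain ⟨x, hxt, hxd⟩ := htcov y hy
    obtain ⟨i, hi⟩ := List.mem_iff_get.mp (Finset.mem_toList.mpr hxt)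
    refine Set.mem_iUnion.mpr ⟨i, ?_⟩
    simp only [hu]
    rw [dif_pos i.isLt]
    rw [Metric.mem_closedBall]
    exact hi ▸ hxd
  have hudiam : ∀ n, EMetric.diam (u n) ≤ ENNReal.ofReal (2 * ε) := by
    intro n
    simp only [hu]
    split
    · next hlt =>
      refine EMetric.diam_le fun a ha b hb => ?_
      rw [Metric.mem_closedBall] at ha hb
      rw [edist_dist]
      apply ENNReal.ofReal_le_ofReal
      have hb' : dist (t.toList.get ⟨_, hlt⟩) b ≤ ε := by rw [dist_comm]; exact hb
      calc dist a b ≤ dist a (t.toList.get ⟨_, hlt⟩) + dist (t.toList.get ⟨_, hlt⟩) b :=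
            dist_triangle _ _ _
        _ ≤ ε + ε := add_le_add ha hb'
        _ = 2 * ε := by ring
    · simp [EMetric.diam]
  have h2ε : ENNReal.ofReal (2 * ε) ≤ r0 :=
    le_trans (ENNReal.ofReal_le_ofReal (by linarith)) hc
  -- Hausdorff measure bound: μH K / 2 ≤ N * (2ε)^s
  have hHaus : μH[s] K / 2 ≤ N * ENNReal.ofReal (2 * ε) ^ s := by
    have hinf := hI.le
    have h1 : (⨅ (tc : ℕ → Set (EuclideanSpace ℝ (Fin D))) (_ : K ⊆ ⋃ n, tc n)
        (_ : ∀ n, EMetric.diam (tc n) ≤ r0),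
        ∑' n, ⨆ _ : (tc n).Nonempty, EMetric.diam (tc n) ^ s) ≤
        ∑' n, ⨆ _ : (u n).Nonempty, EMetric.diam (u n) ^ s := by
      refine iInf_le_of_le u (iInf_le_of_le hucov (iInf_le_of_le
        (fun n => le_trans (hudiam n) h2ε) le_rfl))
    refine le_trans (le_trans hinf h1) ?_
    have hterm : ∀ n, (⨆ _ : (u n).Nonempty, EMetric.diam (u n) ^ s) ≤
        Set.indicator (Set.Iio N) (fun _ => ENNReal.ofReal (2 * ε) ^ s) n := by
      intro n
      rcases lt_or_ge n N with hn | hn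
      · rw [Set.indicator_of_mem (Set.mem_Iio.mpr hn)]
        exact iSup_le fun _ => ENNReal.rpow_le_rpow (hudiam n) hs_pos.le
      · have : u n = ∅ := by
          simp only [hu]
          exact dif_neg (by omega : ¬ n < t.toList.length)
        rw [this]
        simp
    refine le_trans (ENNReal.tsum_le_tsum hterm) ?_
    rw [tsum_eq_sum (s := Finset.range N)
      (fun n hn => Set.indicator_of_notMem (by simpa using hn) _)]
    have : ∀ n ∈ Finset.range N,
        Set.indicator (Set.Iio N) (fun _ => ENNReal.ofReal (2 * ε) ^ s) n =
        ENNReal.ofReal (2 * ε) ^ s := by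
      intro n hn
      exact Set.indicator_of_mem (by simpa using Finset.mem_range.mp hn) _
    rw [Finset.sum_congr rfl this, Finset.sum_const, Finset.card_range, nsmul_eq_mul]
  -- volume lower bound: vol(cthickening) ≥ N * (ε/2)^D * V
  have hVol : (N : ℝ≥0∞) * (ENNReal.ofReal ((ε / 2) ^ D) * V) ≤
      volume (Metric.cthickening ε K) := by
    have hdisj : (↑t : Set (EuclideanSpace ℝ (Fin D))).Pairwise (Function.onFun Disjoint
        fun x => Metric.closedBall x (ε / 2)) := by
      intro x hx y hy hxy
      apply Metric.closedBall_disjoint_closedBall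
      have := htsep x hx y hy hxy
      linarith
    have hsub : (⋃ x ∈ t, Metric.closedBall x (ε / 2)) ⊆ Metric.cthickening ε K := by
      refine Set.iUnion₂_subset fun x hx => ?_
      refine le_trans ?_ (Metric.closedBall_subset_cthickening (htK hx) ε)
      exact Metric.closedBall_subset_closedBall (by linarith)
    calc (N : ℝ≥0∞) * (ENNReal.ofReal ((ε / 2) ^ D) * V)
        = ∑ x ∈ t, ENNReal.ofReal ((ε / 2) ^ D) * V := by
          rw [Finset.sum_const, nsmul_eq_mul]
      _ = ∑ x ∈ t, volume (Metric.closedBall x (ε / 2)) := by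
          refine Finset.sum_congr rfl fun x _ => ?_
          rw [Measure.addHaar_closedBall volume x (by positivity),
            finrank_euclideanSpace_fin]
      _ = volume (⋃ x ∈ t, Metric.closedBall x (ε / 2)) :=
          (measure_biUnion_finset hdisj fun x _ => measurableSet_closedBall).symm
      _ ≤ volume (Metric.cthickening ε K) := measure_mono hsub
  -- combine
  have hμ2 : μH[s] K ≤ 2 * (N * ENNReal.ofReal (2 * ε) ^ s) := by
    calc μH[s] K = 2 * (μH[s] K / 2) := by
          rw [ENNReal.mul_div_cancel' (by norm_num) (by norm_num)]
      _ ≤ 2 * (N * ENNReal.ofReal (2 * ε) ^ s) := by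
          exact mul_le_mul_right hHaus 2
  refine le_trans (mul_le_mul_right hμ2 _) (le_trans ?_ hVol)
  -- numerical inequality
  have hrw : ENNReal.ofReal (2 * ε) ^ s = ENNReal.ofReal ((2 * ε) ^ s) :=
    ENNReal.ofReal_rpow_of_pos (by linarith)
  have hVrw : V = ENNReal.ofReal Vr := (ENNReal.ofReal_toReal hVtop).symm
  have key : ENNReal.ofReal (Vr / 2 ^ (2 * D + 1) * ε ^ d) *
      (2 * ENNReal.ofReal ((2 * ε) ^ s)) ≤
      ENNReal.ofReal ((ε / 2) ^ D) * ENNReal.ofReal Vr := by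
    rw [show ((2 : ℝ≥0∞)) = ENNReal.ofReal 2 from by norm_num,
      ← ENNReal.ofReal_mul (by norm_num), ← ENNReal.ofReal_mul (by positivity),
      ← ENNReal.ofReal_mul (by positivity)]
    apply ENNReal.ofReal_le_ofReal
    -- real inequality
    have h2s : (2 : ℝ) ^ s ≤ 2 ^ (D : ℕ) := by
      rw [← Real.rpow_natCast 2 D]
      apply Real.rpow_le_rpow_of_exponent_le one_le_two
      simp only [hs_def]
      have : (0 : ℝ) ≤ d := Nat.cast_nonneg d
      linarith
    have hεds : ε ^ d * ε ^ s = ε ^ D := by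
      rw [← Real.rpow_natCast ε d, ← Real.rpow_add hε0, ← Real.rpow_natCast ε D]
      congr 1
      simp only [hs_def]
      ring
    have hmul : (2 * ε) ^ s = 2 ^ s * ε ^ s := Real.mul_rpow (by norm_num) hε0.le
    rw [hmul, div_pow]
    have hεs : 0 < ε ^ s := Real.rpow_pos_of_pos hε0 s
    have hεD : 0 < (ε : ℝ) ^ D := pow_pos hε0 D
    have h2D : (0 : ℝ) < 2 ^ D := by positivity
    have hD2 : (2 : ℝ) ^ (2 * D + 1) = 2 * 2 ^ D * 2 ^ D := by
      rw [pow_succ, two_mul, pow_add]; ring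
    have h2Dne : ((2 : ℝ) ^ D) ≠ 0 := h2D.ne'
    have e1 : Vr / 2 ^ (2 * D + 1) * ε ^ d * (2 * (2 ^ s * ε ^ s)) =
        Vr * (ε ^ d * ε ^ s) * 2 ^ s / (2 ^ D * 2 ^ D) := by
      rw [hD2]; field_simp
    have e2 : ε ^ D / 2 ^ D * Vr = Vr * ε ^ D * 2 ^ D / (2 ^ D * 2 ^ D) := by
      field_simp
    rw [e1, hεds, e2]
    gcongr
  calc ENNReal.ofReal (Vr / 2 ^ (2 * D + 1) * ε ^ d) *
        (2 * (↑N * ENNReal.ofReal (2 * ε) ^ s))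
      = ↑N * (ENNReal.ofReal (Vr / 2 ^ (2 * D + 1) * ε ^ d) *
          (2 * ENNReal.ofReal ((2 * ε) ^ s))) := by rw [hrw]; ring
    _ ≤ ↑N * (ENNReal.ofReal ((ε / 2) ^ D) * ENNReal.ofReal Vr) := mul_le_mul_right key _
    _ = ↑N * (ENNReal.ofReal ((ε / 2) ^ D) * V) := by rw [hVrw]
end

section
/- Let T be a compact subset of R^d and let f : T → R^d be a C^1 function (extendable to a C^1 function on a neighborhood of T). Fix u ∈ R^d. Assume f has no solutions of f(t)=u on the boundary ∂T, and that for every interior point t of T with f(t)=u one has det(f'(t)) ≠ 0. Then the number of solutions N_u(f,T) = #{t ∈ T : f(t)=u} is finite, and for all sufficiently small δ > 0, N_u(f,T) = (1/λ_d(B(0,δ))) ∫_T 1_{|f(t)-u|<δ} |det f'(t)| dt. -/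
open MeasureTheory Metric Set

set_option maxHeartbeats 2000000 in
/-- Kac's counting formula: `T ⊂ ℝ^d` compact, `f` of class `C^1`
on an open neighborhood `U` of `T`, `u ∈ ℝ^d`, no solutions of `f(t) = u` on
the boundary `∂T`, and `det f'(t) ≠ 0` at each interior solution. Then the
number of solutions `N_u(f,T)` is finite and, for all sufficiently small
`δ > 0`, equals
`(1/λ_d(B(0,δ))) ∫_T 1_{‖f(t)-u‖<δ} |det f'(t)| dt`. -/
theorem stmt5 (d : ℕ) (T U : Set (EuclideanSpace ℝ (Fin d)))
    (hT : IsCompact T) (hU : IsOpen U) (hTU : T ⊆ U)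
    (f : EuclideanSpace ℝ (Fin d) → EuclideanSpace ℝ (Fin d))
    (hf : ContDiffOn ℝ 1 f U)
    (u : EuclideanSpace ℝ (Fin d))
    (hbd : ∀ t ∈ frontier T, f t ≠ u)
    (hreg : ∀ t ∈ interior T, f t = u →
      LinearMap.det ((fderiv ℝ f t).toLinearMap) ≠ 0) :
    {t ∈ T | f t = u}.Finite ∧
    ∀ᶠ δ in nhdsWithin (0 : ℝ) (Set.Ioi 0),
      ({t ∈ T | f t = u}.ncard : ℝ)
        = (volume (ball (0 : EuclideanSpace ℝ (Fin d)) δ)).toReal⁻¹ *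
          ∫ t in T, (if ‖f t - u‖ < δ then
              |LinearMap.det ((fderiv ℝ f t).toLinearMap)| else 0) ∂volume := by
  classical
  set S : Set (EuclideanSpace ℝ (Fin d)) := {t ∈ T | f t = u} with hSdef
  -- solutions lie in the interior
  have hSint : ∀ s ∈ S, s ∈ interior T := by
    intro s hs
    by_contra h
    exact hbd s ⟨subset_closure hs.1, h⟩ hs.2
  have hST : S ⊆ T := fun s hs => hs.1
  have hSU : S ⊆ U := fun s hs => hTU hs.1
  have hcd : ∀ t ∈ U, ContDiffAt ℝ 1 f t := fun t ht => hf.contDiffAt (hU.mem_nhds ht)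
  -- local inverse function theorem at each solution
  have key : ∀ s : EuclideanSpace ℝ (Fin d), ∃ e : OpenPartialHomeomorph (EuclideanSpace ℝ (Fin d)) (EuclideanSpace ℝ (Fin d)), s ∈ S → (⇑e = f ∧ s ∈ e.source) := by
    intro s
    by_cases hs : s ∈ S
    · have hsU : s ∈ U := hSU hs
      have hdet : (fderiv ℝ f s).det ≠ 0 := hreg s (hSint s hs) hs.2
      have hdiff : DifferentiableAt ℝ f s := (hcd s hsU).differentiableAt one_ne_zero
      have hB : HasFDerivAt f
          (((fderiv ℝ f s).toContinuousLinearEquivOfDetNeZero hdet : (EuclideanSpace ℝ (Fin d)) ≃L[ℝ] (EuclideanSpace ℝ (Fin d))) : (EuclideanSpace ℝ (Fin d)) →L[ℝ] (EuclideanSpace ℝ (Fin d))) s := by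
        rw [ContinuousLinearMap.coe_toContinuousLinearEquivOfDetNeZero]
        exact hdiff.hasFDerivAt
      exact ⟨(hcd s hsU).toOpenPartialHomeomorph f hB one_ne_zero,
        fun _ => ⟨rfl, (hcd s hsU).mem_toOpenPartialHomeomorph_source hB one_ne_zero⟩⟩
    · exact ⟨OpenPartialHomeomorph.refl (EuclideanSpace ℝ (Fin d)), fun h => absurd h hs⟩
  choose e he using key
  have hef : ∀ s ∈ S, ⇑(e s) = f := fun s hs => (he s hs).1
  have hes : ∀ s ∈ S, s ∈ (e s).source := fun s hs => (he s hs).2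
  -- injectivity of f on each source; each source contains one solution
  have huniq : ∀ s ∈ S, ∀ t ∈ (e s).source, f t = u → t = s := by
    intro s hs t ht hft
    apply (e s).injOn ht (hes s hs)
    rw [hef s hs, hft, hs.2]
  -- S is compact
  have hScl : IsClosed S := (hf.continuousOn.mono hTU).preimage_isClosed_of_isClosed
    hT.isClosed isClosed_singleton
  have hScpt : IsCompact S := hT.of_isClosed_subset hScl hST
  -- S is finite
  have hSfin : S.Finite := by
    obtain ⟨F, hFS, hFfin, hFcover⟩ := hScpt.elim_finite_subcover_image
      (fun s (hs : s ∈ S) => (e s).open_source)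
      (fun s hs => mem_iUnion₂.2 ⟨s, hs, hes s hs⟩)
    refine hFfin.subset fun t ht => ?_
    obtain ⟨s, hsF, hts⟩ := mem_iUnion₂.1 (hFcover ht)
    rwa [huniq s (hFS hsF) t hts ht.2]
  refine ⟨hSfin, ?_⟩
  -- choose radii
  have keyr : ∀ s : EuclideanSpace ℝ (Fin d), ∃ r : ℝ, 0 < r ∧ (s ∈ S →
      (ball s (2 * r) ⊆ (e s).source ∩ interior T ∧ ball s (2 * r) ∩ (S \ {s}) = ∅)) := by
    intro s
    by_cases hs : s ∈ S
    · have hop : IsOpen (((e s).source ∩ interior T) ∩ (S \ {s})ᶜ) :=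
        (((e s).open_source.inter isOpen_interior)).inter
          (((hSfin.subset diff_subset).isClosed).isOpen_compl)
      have hmem : s ∈ ((e s).source ∩ interior T) ∩ (S \ {s})ᶜ :=
        ⟨⟨hes s hs, hSint s hs⟩, fun h => h.2 rfl⟩
      obtain ⟨ε, hε, hball⟩ := Metric.isOpen_iff.1 hop s hmem
      refine ⟨ε / 2, by linarith, fun _ => ?_⟩
      have h2 : (2 : ℝ) * (ε / 2) = ε := by ring
      rw [h2]
      constructor
      · exact fun x hx => (hball hx).1
      · ext x
        simp only [mem_inter_iff, mem_empty_iff_false, iff_false, not_and]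
        exact fun hx hx2 => (hball hx).2 hx2
    · exact ⟨1, one_pos, fun h => absurd h hs⟩
  choose r hr hrS using keyr
  set V : EuclideanSpace ℝ (Fin d) → Set (EuclideanSpace ℝ (Fin d)) := fun s => ball s (r s) with hVdef
  have hVsub : ∀ s ∈ S, V s ⊆ (e s).source ∩ interior T := by
    intro s hs
    refine subset_trans (ball_subset_ball ?_) (hrS s hs).1
    linarith [hr s]
  have hsV : ∀ s : EuclideanSpace ℝ (Fin d), s ∈ V s := fun s => mem_ball_self (hr s)
  -- disjointness of the V s
  have hVdisj : (S : Set (EuclideanSpace ℝ (Fin d))).Pairwise (Function.onFun Disjoint V) := by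
    intro s hs s' hs' hne
    rw [Function.onFun, Set.disjoint_left]
    intro x hx hx'
    rcases le_total (r s') (r s) with hle | hle
    · have : dist s' s < 2 * r s := by
        have h1 : dist x s < r s := hx
        have h2 : dist x s' < r s' := hx'
        have := dist_triangle s' x s
        rw [dist_comm s' x] at this
        linarith
      have : s' ∈ ball s (2 * r s) ∩ (S \ {s}) := ⟨this, hs', hne.symm⟩
      rw [(hrS s hs).2] at this
      exact this
    · have : dist s s' < 2 * r s' := by
        have h1 : dist x s < r s := hx
        have h2 : dist x s' < r s' := hx'
        have := dist_triangle s x s'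
        rw [dist_comm s x] at this
        linarith
      have : s ∈ ball s' (2 * r s') ∩ (S \ {s'}) := ⟨this, hs, hne⟩
      rw [(hrS s' hs').2] at this
      exact this
  -- f image of V s is open and contains u
  have hfVopen : ∀ s ∈ S, IsOpen (f '' V s) := by
    intro s hs
    rw [← hef s hs]
    exact (e s).isOpen_image_of_subset_source isOpen_ball
      ((hVsub s hs).trans inter_subset_left)
  have hufV : ∀ s ∈ S, u ∈ f '' V s := fun s hs => ⟨s, hsV s, hs.2⟩
  -- choose δ₁ with ball u δ₁ inside all images
  have hIopen : IsOpen (⋂ s ∈ S, f '' V s) := hSfin.isOpen_biInter hfVopen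
  have huI : u ∈ ⋂ s ∈ S, f '' V s := mem_iInter₂.2 hufV
  obtain ⟨δ₁, hδ₁, hballI⟩ := Metric.isOpen_iff.1 hIopen u huI
  -- choose m: away from the V s, ‖f t - u‖ is bounded below
  have hKcl : IsCompact (T \ ⋃ s ∈ S, V s) :=
    hT.diff (isOpen_biUnion fun s _ => isOpen_ball)
  obtain ⟨m, hm, hmK⟩ : ∃ m : ℝ, 0 < m ∧ ∀ t ∈ T \ ⋃ s ∈ S, V s, m ≤ ‖f t - u‖ := by
    rcases eq_empty_or_nonempty (T \ ⋃ s ∈ S, V s) with hK | hK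
    · exact ⟨1, one_pos, by rw [hK]; simp⟩
    · have hcont : ContinuousOn (fun t => ‖f t - u‖) (T \ ⋃ s ∈ S, V s) :=
        (((hf.continuousOn.mono hTU).mono diff_subset).sub continuousOn_const).norm
      obtain ⟨t₀, ht₀, ht₀min⟩ := hKcl.exists_isMinOn hK hcont
      refine ⟨‖f t₀ - u‖, ?_, fun t ht => ht₀min ht⟩
      rw [norm_pos_iff, sub_ne_zero]
      intro hft₀
      have ht₀S : t₀ ∈ S := ⟨ht₀.1, hft₀⟩
      exact ht₀.2 (mem_iUnion₂.2 ⟨t₀, ht₀S, hsV t₀⟩)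
  -- continuity and integrability of the Jacobian
  have hgcont : ContinuousOn (fun t => |(fderiv ℝ f t).det|) U :=
    (ContinuousLinearMap.continuous_det.comp_continuousOn
      (hf.continuousOn_fderiv_of_isOpen hU le_rfl)).abs
  have hgint : IntegrableOn (fun t => |(fderiv ℝ f t).det|) T volume :=
    (hgcont.mono hTU).integrableOn_compact hT
  -- now the eventual statement
  filter_upwards [Ioc_mem_nhdsGT_of_mem (show (0:ℝ) ∈ Ico 0 (min δ₁ m) from
    ⟨le_refl 0, lt_min hδ₁ hm⟩)] with δ hδ
  obtain ⟨hδ0, hδle⟩ := hδ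
  have hδδ₁ : δ ≤ δ₁ := hδle.trans (min_le_left _ _)
  have hδm : δ ≤ m := hδle.trans (min_le_right _ _)
  set A : EuclideanSpace ℝ (Fin d) → Set (EuclideanSpace ℝ (Fin d)) := fun s => V s ∩ f ⁻¹' (ball u δ) with hAdef
  have hAopen : ∀ s ∈ S, IsOpen (A s) := by
    intro s hs
    have hVU : V s ⊆ U := fun x hx =>
      hTU (interior_subset ((hVsub s hs) hx).2)
    exact (hf.continuousOn.mono hVU).isOpen_inter_preimage isOpen_ball isOpen_ball
  have hAV : ∀ s, A s ⊆ V s := fun s => inter_subset_left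
  have hAT : ∀ s ∈ S, A s ⊆ T := fun s hs =>
    (hAV s).trans (((hVsub s hs).trans inter_subset_right).trans interior_subset)
  -- image of A s is exactly ball u δ
  have hfA : ∀ s ∈ S, f '' A s = ball u δ := by
    intro s hs
    apply Subset.antisymm
    · rintro y ⟨x, hx, rfl⟩
      exact hx.2
    · intro y hy
      have : y ∈ f '' V s := by
        have := hballI (lt_of_lt_of_le hy hδδ₁ : y ∈ ball u δ₁)
        exact mem_iInter₂.1 this s hs
      obtain ⟨x, hx, rfl⟩ := this
      exact ⟨x, ⟨hx, hy⟩, rfl⟩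
  -- injectivity and derivative hypotheses on A s
  have hAinj : ∀ s ∈ S, InjOn f (A s) := by
    intro s hs
    have : A s ⊆ (e s).source := (hAV s).trans ((hVsub s hs).trans inter_subset_left)
    intro x hx y hy hxy
    apply (e s).injOn (this hx) (this hy)
    rw [hef s hs]; exact hxy
  have hAderiv : ∀ s ∈ S, ∀ x ∈ A s, HasFDerivWithinAt f (fderiv ℝ f x) (A s) x := by
    intro s hs x hx
    have hxU : x ∈ U := hTU (hAT s hs hx)
    exact ((hcd x hxU).differentiableAt one_ne_zero).hasFDerivAt.hasFDerivWithinAt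
  -- the indicator set in T equals the union of the A s
  have hset : ∀ t ∈ T, (if ‖f t - u‖ < δ then |(fderiv ℝ f t).det| else 0)
      = (⋃ s ∈ S, A s).indicator (fun t => |(fderiv ℝ f t).det|) t := by
    intro t ht
    have hiff : (‖f t - u‖ < δ) ↔ t ∈ ⋃ s ∈ S, A s := by
      constructor
      · intro h
        have htV : t ∈ ⋃ s ∈ S, V s := by
          by_contra htV
          exact absurd (hmK t ⟨ht, htV⟩) (by linarith)
        obtain ⟨s, hs, hts⟩ := mem_iUnion₂.1 htV
        exact mem_iUnion₂.2 ⟨s, hs, mem_inter hts (Set.mem_preimage.2 (mem_ball_iff_norm.2 h))⟩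
      · intro htA
        obtain ⟨s, hs, hts⟩ := mem_iUnion₂.1 htA
        exact mem_ball_iff_norm.1 (Set.mem_preimage.1 hts.2)
    by_cases h : ‖f t - u‖ < δ
    · rw [if_pos h, indicator_of_mem (hiff.1 h)]
    · rw [if_neg h, indicator_of_notMem (fun hm => h (hiff.2 hm))]
  -- compute the integral
  have hμball : volume (ball u δ) = volume (ball (0 : EuclideanSpace ℝ (Fin d)) δ) := Measure.addHaar_ball_center volume u δ
  have hAmeas : MeasurableSet (⋃ s ∈ S, A s) :=
    (isOpen_biUnion fun s hs => hAopen s hs).measurableSet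
  have hTA : T ∩ ⋃ s ∈ S, A s = ⋃ s ∈ S, A s :=
    inter_eq_self_of_subset_right (iUnion₂_subset fun s hs => hAT s hs)
  have step1 : (∫ t in T, (if ‖f t - u‖ < δ then |(fderiv ℝ f t).det| else 0) ∂volume)
      = ∫ t in ⋃ s ∈ S, A s, |(fderiv ℝ f t).det| ∂volume := by
    rw [setIntegral_congr_fun hT.measurableSet hset, setIntegral_indicator hAmeas, hTA]
  have hBU : (⋃ s ∈ S, A s) = ⋃ s ∈ hSfin.toFinset, A s := by
    simp [hSfin.mem_toFinset]
  have step2 : (∫ t in ⋃ s ∈ S, A s, |(fderiv ℝ f t).det| ∂volume)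
      = ∑ s ∈ hSfin.toFinset, ∫ t in A s, |(fderiv ℝ f t).det| ∂volume := by
    rw [hBU]
    apply integral_biUnion_finset
    · intro s hs
      exact (hAopen s (hSfin.mem_toFinset.1 hs)).measurableSet
    · intro s hs s' hs' hne
      exact hVdisj (hSfin.mem_toFinset.1 hs) (hSfin.mem_toFinset.1 hs') hne
        |>.mono (hAV s) (hAV s')
    · intro s hs
      exact hgint.mono_set (hAT s (hSfin.mem_toFinset.1 hs))
  have step3 : ∀ s ∈ hSfin.toFinset,
      (∫ t in A s, |(fderiv ℝ f t).det| ∂volume) = (volume (ball (0:EuclideanSpace ℝ (Fin d)) δ)).toReal := by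
    intro s hs'
    have hs : s ∈ S := hSfin.mem_toFinset.1 hs'
    have := integral_image_eq_integral_abs_det_fderiv_smul volume
      (hAopen s hs).measurableSet (hAderiv s hs) (hAinj s hs) (fun _ => (1:ℝ))
    rw [hfA s hs] at this
    simp only [smul_eq_mul, mul_one] at this
    rw [← this, setIntegral_const, smul_eq_mul, mul_one, measureReal_def, hμball]
  have hvol_ne : (volume (ball (0:EuclideanSpace ℝ (Fin d)) δ)).toReal ≠ 0 := by
    have h1 : (0:ENNReal) < volume (ball (0:EuclideanSpace ℝ (Fin d)) δ) := measure_ball_pos volume 0 hδ0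
    have h2 : volume (ball (0:EuclideanSpace ℝ (Fin d)) δ) < ⊤ := measure_ball_lt_top
    exact ENNReal.toReal_ne_zero.2 ⟨h1.ne', h2.ne⟩
  have hcard : S.ncard = hSfin.toFinset.card := Set.ncard_eq_toFinset_card S hSfin
  have hdetdef : ∀ t : EuclideanSpace ℝ (Fin d), LinearMap.det ((fderiv ℝ f t).toLinearMap) = (fderiv ℝ f t).det :=
    fun t => rfl
  simp only [hdetdef]
  rw [step1, step2, Finset.sum_congr rfl step3, Finset.sum_const, nsmul_eq_mul, hcard]
  field_simp
end

section
/- Let T be a compact subset of R^d, and let X_n, X : T → R^d be C^1 functions such that X_n → X in the C^1 topology (uniform convergence of functions and derivatives on T). Fix u ∈ R^d. Assume X(t) ≠ u for all t ∈ ∂T, and that for every t ∈ T with X(t) = u one has det(X'(t)) ≠ 0. Then for all sufficiently large n, N_u(X_n,T) = N_u(X,T); in particular N_u(X_n,T) → N_u(X,T). -/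
open MeasureTheory Metric Set Filter
open scoped NNReal

/-- Auxiliary abbreviation for Euclidean space. -/
abbrev Euc (d : ℕ) := EuclideanSpace ℝ (Fin d)

lemma approx_of_fderiv_bound {E F : Type*} [NormedAddCommGroup E] [NormedSpace ℝ E]
    [NormedAddCommGroup F] [NormedSpace ℝ F]
    (f : E → F) (φ : E → E →L[ℝ] F) (A : E →L[ℝ] F) (s : Set E) (hs : Convex ℝ s) (c : ℝ≥0)
    (hf : ∀ x ∈ s, HasFDerivAt f (φ x) x)
    (hb : ∀ x ∈ s, ‖φ x - A‖ ≤ c) :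
    ApproximatesLinearOn f A s c := by
  intro x hx y hy
  have h := hs.norm_image_sub_le_of_norm_hasFDerivWithin_le
    (f := fun z => f z - A z) (f' := fun z => φ z - A)
    (fun z hz => ((hf z hz).sub (A.hasFDerivAt)).hasFDerivWithinAt) hb hy hx
  have e : f x - A x - (f y - A y) = f x - f y - A (x - y) := by
    rw [map_sub]; abel
  simpa [e] using h

/-- stability of the number of roots under `C^1` convergence:
`T ⊂ ℝ^d` compact, `X_n, X` of class `C^1` on an open neighborhood `U` of `T`,
with `X_n → X` and `X_n' → X'` uniformly on `T` (the `C^1` topology). If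
`X(t) ≠ u` on `∂T` and `det X'(t) ≠ 0` at every solution `t ∈ T` of `X(t)=u`,
then `N_u(X_n,T) = N_u(X,T)` for all sufficiently large `n`; in particular
`N_u(X_n,T) → N_u(X,T)`. -/
theorem stmt6 (d : ℕ) (T U : Set (EuclideanSpace ℝ (Fin d)))
    (hT : IsCompact T) (hU : IsOpen U) (hTU : T ⊆ U)
    (X : EuclideanSpace ℝ (Fin d) → EuclideanSpace ℝ (Fin d))
    (Xn : ℕ → EuclideanSpace ℝ (Fin d) → EuclideanSpace ℝ (Fin d))
    (hX : ContDiffOn ℝ 1 X U) (hXn : ∀ n, ContDiffOn ℝ 1 (Xn n) U)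
    (hconv : TendstoUniformlyOn (fun n => Xn n) X atTop T)
    (hconv' : TendstoUniformlyOn (fun n t => fderiv ℝ (Xn n) t) (fun t => fderiv ℝ X t)
      atTop T)
    (u : EuclideanSpace ℝ (Fin d))
    (hbd : ∀ t ∈ frontier T, X t ≠ u)
    (hreg : ∀ t ∈ T, X t = u → LinearMap.det ((fderiv ℝ X t).toLinearMap) ≠ 0) :
    (∀ᶠ n in atTop, {t ∈ T | Xn n t = u}.ncard = {t ∈ T | X t = u}.ncard) ∧
    Tendsto (fun n => ({t ∈ T | Xn n t = u}.ncard : ℝ)) atTop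
      (nhds ({t ∈ T | X t = u}.ncard : ℝ)) := by
  classical
  -- It suffices to prove the eventual equality.
  suffices hmain : ∀ᶠ n in atTop, {t ∈ T | Xn n t = u}.ncard = {t ∈ T | X t = u}.ncard by
    refine ⟨hmain, ?_⟩
    have he : (fun n => ({t ∈ T | Xn n t = u}.ncard : ℝ)) =ᶠ[atTop]
        (fun _ => ({t ∈ T | X t = u}.ncard : ℝ)) := hmain.mono (fun n hn => by simp [hn])
    exact Tendsto.congr' he.symm tendsto_const_nhds
  rcases subsingleton_or_nontrivial (Euc d) with hsub | hnt
  · -- degenerate case `d = 0` : everything is a root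
    have heq : ∀ (Y : Euc d → Euc d), {t ∈ T | Y t = u} = T := by
      intro Y; ext t; simp [Subsingleton.elim (Y t) u]
    filter_upwards with n
    rw [heq, heq]
  set S : Set (Euc d) := {t ∈ T | X t = u} with hSdef
  have hST : S ⊆ T := fun t ht => ht.1
  -- basic facts
  have hXc : ContinuousOn X U := hX.continuousOn
  have hXd : ∀ s ∈ U, HasFDerivAt X (fderiv ℝ X s) s := fun s hs =>
    ((hX.differentiableOn one_ne_zero).differentiableAt (hU.mem_nhds hs)).hasFDerivAt
  have hXnd : ∀ n, ∀ s ∈ U, HasFDerivAt (Xn n) (fderiv ℝ (Xn n) s) s := fun n s hs =>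
    (((hXn n).differentiableOn one_ne_zero).differentiableAt (hU.mem_nhds hs)).hasFDerivAt
  have hfc : ContinuousOn (fderiv ℝ X) U := hX.continuousOn_fderiv_of_isOpen hU le_rfl
  -- S is compact
  have hSeq : S = T ∩ X ⁻¹' {u} := by ext t; simp [hSdef, Set.mem_sep_iff]
  have hScl : IsClosed S := by
    rw [hSeq]
    exact (hXc.mono hTU).preimage_isClosed_of_isClosed hT.isClosed isClosed_singleton
  have hScomp : IsCompact S := hT.of_isClosed_subset hScl hST
  -- roots are interior points of T
  have hint : ∀ t ∈ S, t ∈ interior T := by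
    intro t ht
    by_contra h
    have : t ∈ frontier T := ⟨subset_closure ht.1, h⟩
    exact hbd t this ht.2
  -- the linearization at each root, as a continuous linear equivalence
  have hdet : ∀ t ∈ S, ContinuousLinearMap.det (fderiv ℝ X t) ≠ 0 := by
    intro t ht
    exact hreg t ht.1 ht.2
  set A : Euc d → (Euc d ≃L[ℝ] Euc d) := fun t =>
    if h : ContinuousLinearMap.det (fderiv ℝ X t) ≠ 0 then
      (fderiv ℝ X t).toContinuousLinearEquivOfDetNeZero h
    else ContinuousLinearEquiv.refl ℝ (Euc d) with hAdef
  have hAcoe : ∀ t ∈ S, ((A t : Euc d →L[ℝ] Euc d)) = fderiv ℝ X t := by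
    intro t ht
    simp only [hAdef, dif_pos (hdet t ht)]
    exact ContinuousLinearMap.coe_toContinuousLinearEquivOfDetNeZero _ _
  set N : Euc d → ℝ≥0 := fun t => ‖(((A t).symm : Euc d →L[ℝ] Euc d))‖₊ with hNdef
  have hNpos : ∀ t, 0 < N t := by
    intro t
    rcases eq_zero_or_pos (N t) with h | h
    · exfalso
      have hz : (((A t).symm : Euc d →L[ℝ] Euc d)) = 0 := by
        rwa [← nnnorm_eq_zero]
      obtain ⟨x, hx⟩ := exists_ne (0 : Euc d)
      apply hx
      have hzx : (A t).symm x = 0 := by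
        rw [show (A t).symm x = (((A t).symm : Euc d →L[ℝ] Euc d)) x from rfl, hz]; rfl
      calc x = (A t) ((A t).symm x) := ((A t).apply_symm_apply x).symm
        _ = (A t) 0 := by rw [hzx]
        _ = 0 := map_zero _
    · exact h
  -- the two approximation constants
  set c4 : Euc d → ℝ≥0 := fun t => (N t)⁻¹ / 4 with hc4def
  set c2 : Euc d → ℝ≥0 := fun t => (N t)⁻¹ / 2 with hc2def
  have hNinvpos : ∀ t, 0 < ((N t)⁻¹ : ℝ≥0) :=
    fun t => pos_iff_ne_zero.2 (inv_ne_zero (hNpos t).ne')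
  have hNrpos : ∀ t, (0 : ℝ) < (N t : ℝ) := fun t => by exact_mod_cast hNpos t
  have hc4pos : ∀ t, 0 < c4 t := by
    intro t
    rw [hc4def, pos_iff_ne_zero]
    exact div_ne_zero (hNinvpos t).ne' (by norm_num)
  have hc2pos : ∀ t, 0 < c2 t := by
    intro t
    rw [hc2def, pos_iff_ne_zero]
    exact div_ne_zero (hNinvpos t).ne' (by norm_num)
  have hNinvr : ∀ t, (((N t)⁻¹ : ℝ≥0) : ℝ) = ((N t : ℝ))⁻¹ := fun t => by push_cast; ring
  have hc4coe : ∀ t, ((c4 t : ℝ≥0) : ℝ) = ((N t : ℝ))⁻¹ / 4 := fun t => by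
    rw [hc4def]; push_cast; ring
  have hc2coe : ∀ t, ((c2 t : ℝ≥0) : ℝ) = ((N t : ℝ))⁻¹ / 2 := fun t => by
    rw [hc2def]; push_cast; ring
  have hNinvrpos : ∀ t, (0 : ℝ) < ((N t : ℝ))⁻¹ := fun t => inv_pos.2 (hNrpos t)
  have hc4lt : ∀ t, c4 t < (N t)⁻¹ := by
    intro t
    rw [← NNReal.coe_lt_coe, hc4coe, hNinvr]
    linarith [hNinvrpos t]
  have hc2lt : ∀ t, c2 t < (N t)⁻¹ := by
    intro t
    rw [← NNReal.coe_lt_coe, hc2coe, hNinvr]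
    linarith [hNinvrpos t]
  -- choice of radii around each root
  have hradius : ∀ t ∈ S, ∃ r > 0, closedBall t r ⊆ interior T ∧
      ∀ s ∈ closedBall t r, ‖fderiv ℝ X s - ((A t : Euc d →L[ℝ] Euc d))‖ ≤ c4 t := by
    intro t ht
    obtain ⟨r2, hr2pos, hr2⟩ := Metric.isOpen_iff.1 isOpen_interior t (hint t ht)
    have hcont : ContinuousAt (fderiv ℝ X) t :=
      hfc.continuousAt (hU.mem_nhds (hTU ht.1))
    obtain ⟨r1, hr1pos, hr1⟩ := Metric.continuousAt_iff.1 hcont (c4 t)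
      (by exact_mod_cast hc4pos t)
    refine ⟨min r1 r2 / 2, by positivity, ?_, ?_⟩
    · intro s hs
      apply hr2
      rw [mem_closedBall] at hs
      rw [mem_ball]
      calc dist s t ≤ min r1 r2 / 2 := hs
        _ < r2 := (lt_min_iff.1 (half_lt_self (lt_min hr1pos hr2pos))).2
    · intro s hs
      rw [mem_closedBall] at hs
      have hds : dist s t < r1 :=
        lt_of_le_of_lt hs (lt_min_iff.1 (half_lt_self (lt_min hr1pos hr2pos))).1
      have hb := hr1 hds
      rw [dist_eq_norm] at hb
      rw [hAcoe t ht]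
      exact hb.le
  choose! r hrpos hrT hrA using hradius
  -- `X` linearly approximated by `A t` near each root
  have hAX : ∀ t ∈ S,
      ApproximatesLinearOn X ((A t : Euc d →L[ℝ] Euc d)) (closedBall t (r t)) (c4 t) := by
    intro t ht
    exact approx_of_fderiv_bound X (fun s => fderiv ℝ X s) _ _ (convex_closedBall _ _) _
      (fun s hs => hXd s (hTU (interior_subset (hrT t ht hs)))) (fun s hs => hrA t ht s hs)
  have hXinj : ∀ t ∈ S, InjOn X (closedBall t (r t)) := by
    intro t ht
    exact (hAX t ht).injOn (Or.inr (hc4lt t))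
  -- each root is the unique root in its ball; hence S is finite
  have huniq : ∀ t ∈ S, ∀ s ∈ closedBall t (r t), X s = u → s = t := by
    intro t ht s hs hsu
    exact hXinj t ht hs (mem_closedBall_self (hrpos t ht).le) (by rw [hsu, ht.2])
  have hSfin : S.Finite := by
    obtain ⟨b, hbS, hbfin, hbcov⟩ := hScomp.elim_finite_subcover_image
      (c := fun t => ball t (r t)) (fun t _ => isOpen_ball)
      (fun s hs => mem_biUnion hs (mem_ball_self (hrpos s hs)))
    apply Set.Finite.subset hbfin
    intro s hs
    obtain ⟨t, htb, hst⟩ := mem_iUnion₂.1 (hbcov hs)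
    have hs_eq : s = t := huniq t (hbS htb) s (ball_subset_closedBall hst) hs.2
    rwa [hs_eq]
  -- shrink the radii to make the closed balls pairwise disjoint
  set F : Finset (Euc d) := hSfin.toFinset with hFdef
  have hFS : ∀ {t}, t ∈ F ↔ t ∈ S := fun {t} => hSfin.mem_toFinset
  set ρ : Euc d → ℝ := fun t =>
    if h : (F.erase t).Nonempty then
      min (r t) ((F.erase t).inf' h (fun t' => dist t t') / 3)
    else r t with hρdef
  have hρr : ∀ t, ρ t ≤ r t := by
    intro t
    rw [hρdef]
    dsimp only
    split
    · exact min_le_left _ _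
    · exact le_refl _
  have hρpos : ∀ t ∈ S, 0 < ρ t := by
    intro t ht
    rw [hρdef]
    dsimp only
    split
    next h =>
      refine lt_min (hrpos t ht) ?_
      have h0 : 0 < (F.erase t).inf' h (fun t' => dist t t') := by
        rw [Finset.lt_inf'_iff]
        intro t' ht'
        rw [dist_pos]
        exact fun he => (Finset.ne_of_mem_erase ht') he.symm
      linarith
    next => exact hrpos t ht
  have hρsep : ∀ t ∈ S, ∀ t' ∈ S, t ≠ t' → ρ t ≤ dist t t' / 3 := by
    intro t ht t' ht' hne
    have ht'e : t' ∈ F.erase t := Finset.mem_erase.2 ⟨hne.symm, hFS.2 ht'⟩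
    have hne' : (F.erase t).Nonempty := ⟨t', ht'e⟩
    rw [hρdef]
    dsimp only
    rw [dif_pos hne']
    refine le_trans (min_le_right _ _) ?_
    have := Finset.inf'_le (fun t'' => dist t t'') ht'e
    linarith
  have hdisj : ∀ t ∈ S, ∀ t' ∈ S, t ≠ t' →
      closedBall t (ρ t) ∩ closedBall t' (ρ t') = ∅ := by
    intro t ht t' ht' hne
    rw [Set.eq_empty_iff_forall_notMem]
    intro s hs
    have h1 : dist s t ≤ ρ t := mem_closedBall.1 hs.1
    have h2 : dist s t' ≤ ρ t' := mem_closedBall.1 hs.2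
    have h3 : ρ t ≤ dist t t' / 3 := hρsep t ht t' ht' hne
    have h4 : ρ t' ≤ dist t t' / 3 := by
      have := hρsep t' ht' t ht hne.symm
      rwa [dist_comm] at this
    have htt' : 0 < dist t t' := dist_pos.2 hne
    have htr : dist t t' ≤ dist t s + dist s t' := dist_triangle _ _ _
    rw [dist_comm t s] at htr
    linarith
  -- the compact set away from the roots
  set V : Set (Euc d) := ⋃ t ∈ S, ball t (ρ t) with hVdef
  have hVopen : IsOpen V := isOpen_biUnion (fun t _ => isOpen_ball)
  set K : Set (Euc d) := T \ V with hKdef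
  have hKcomp : IsCompact K := hT.diff hVopen
  have hKne : ∀ s ∈ K, X s ≠ u := by
    intro s hs hsu
    have hsS : s ∈ S := ⟨hs.1, hsu⟩
    exact hs.2 (mem_biUnion hsS (mem_ball_self (hρpos s hsS)))
  -- a positive lower bound for ‖X - u‖ on K
  obtain ⟨ε₀, hε₀pos, hε₀⟩ : ∃ ε₀ > 0, ∀ s ∈ K, ε₀ ≤ ‖X s - u‖ := by
    rcases K.eq_empty_or_nonempty with hKe | hKne'
    · exact ⟨1, one_pos, by simp [hKe]⟩
    · have hcont : ContinuousOn (fun s => ‖X s - u‖) K :=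
        ((hXc.mono (fun s hs => hTU hs.1)).sub continuousOn_const).norm
      obtain ⟨s₀, hs₀K, hs₀⟩ := hKcomp.exists_isMinOn hKne' hcont
      refine ⟨‖X s₀ - u‖, ?_, fun s hs => hs₀ hs⟩
      exact norm_sub_pos_iff.2 (hKne s₀ hs₀K)
  -- the eventual properties of `Xn n`
  have hG1 : ∀ᶠ n in atTop, ∀ s ∈ T, dist (X s) (Xn n s) < ε₀ :=
    Metric.tendstoUniformlyOn_iff.1 hconv ε₀ hε₀pos
  have hG2 : ∀ᶠ n in atTop, ∀ t ∈ S, ∀ s ∈ T,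
      dist (fderiv ℝ X s) (fderiv ℝ (Xn n) s) < c4 t := by
    rw [eventually_all_finite hSfin]
    intro t _
    exact Metric.tendstoUniformlyOn_iff.1 hconv' (c4 t) (by exact_mod_cast hc4pos t)
  have hG3 : ∀ᶠ n in atTop, ∀ t ∈ S, dist (X t) (Xn n t) < ((N t : ℝ))⁻¹ / 2 * ρ t := by
    rw [eventually_all_finite hSfin]
    intro t ht
    have hpos : 0 < ((N t : ℝ))⁻¹ / 2 * ρ t := by
      have h1 := hNinvrpos t
      have h2 := hρpos t ht
      positivity
    filter_upwards [Metric.tendstoUniformlyOn_iff.1 hconv _ hpos] with n hn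
    exact hn t (hST ht)
  filter_upwards [hG1, hG2, hG3] with n h1 h2 h3
  -- `Xn n` is linearly approximated by `A t` with constant `c2 t` on each ball
  have hAXn : ∀ t ∈ S,
      ApproximatesLinearOn (Xn n) ((A t : Euc d →L[ℝ] Euc d)) (closedBall t (ρ t)) (c2 t) := by
    intro t ht
    refine approx_of_fderiv_bound (Xn n) (fun s => fderiv ℝ (Xn n) s) _ _
      (convex_closedBall _ _) _ ?_ ?_
    · intro s hs
      have hsr : s ∈ closedBall t (r t) := closedBall_subset_closedBall (hρr t) hs
      exact hXnd n s (hTU (interior_subset (hrT t ht hsr)))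
    · intro s hs
      have hsr : s ∈ closedBall t (r t) := closedBall_subset_closedBall (hρr t) hs
      have hsT : s ∈ T := interior_subset (hrT t ht hsr)
      have b1 : ‖fderiv ℝ (Xn n) s - fderiv ℝ X s‖ ≤ c4 t := by
        have hb := h2 t ht s hsT
        rw [dist_comm, dist_eq_norm] at hb
        exact hb.le
      have b2 : ‖fderiv ℝ X s - ((A t : Euc d →L[ℝ] Euc d))‖ ≤ c4 t := hrA t ht s hsr
      calc ‖fderiv ℝ (Xn n) s - ((A t : Euc d →L[ℝ] Euc d))‖
          = ‖(fderiv ℝ (Xn n) s - fderiv ℝ X s) + (fderiv ℝ X s - ((A t : Euc d →L[ℝ] Euc d)))‖ := by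
            congr 1; abel
        _ ≤ ‖fderiv ℝ (Xn n) s - fderiv ℝ X s‖ + ‖fderiv ℝ X s - ((A t : Euc d →L[ℝ] Euc d))‖ :=
            norm_add_le _ _
        _ ≤ (c4 t : ℝ) + (c4 t : ℝ) := add_le_add b1 b2
        _ = (c2 t : ℝ) := by rw [hc4coe, hc2coe]; ring
  -- existence of a root of `Xn n` in each ball
  have hroot : ∀ t ∈ S, ∃ s, s ∈ closedBall t (ρ t) ∧ Xn n s = u := by
    intro t ht
    have hsurj := (hAXn t ht).surjOn_closedBall_of_nonlinearRightInverse
      (A t).toNonlinearRightInverse (hρpos t ht).le (Subset.refl _)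
    have hnn : ((A t).toNonlinearRightInverse.nnnorm : ℝ) = (N t : ℝ) := rfl
    have hu : u ∈ closedBall (Xn n t)
        (((((A t).toNonlinearRightInverse.nnnorm : ℝ))⁻¹ - (c2 t : ℝ)) * ρ t) := by
      rw [mem_closedBall, hnn, hc2coe]
      have hd : dist u (Xn n t) < ((N t : ℝ))⁻¹ / 2 * ρ t := by
        rw [← ht.2]
        exact h3 t ht
      have hρnn : 0 ≤ ρ t := (hρpos t ht).le
      nlinarith [hd, hρnn]
    obtain ⟨s, hs, hsu⟩ := hsurj hu
    exact ⟨s, hs, hsu⟩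
  choose! σ hσball hσroot using hroot
  -- uniqueness of the root in each ball
  have huniqn : ∀ t ∈ S, ∀ s ∈ closedBall t (ρ t), Xn n s = u → s = σ t := by
    intro t ht s hs hsu
    exact (hAXn t ht).injOn (Or.inr (hc2lt t)) hs (hσball t ht) (by rw [hsu, hσroot t ht])
  -- the root set of `Xn n` is exactly the image of S under σ
  have himg : {s ∈ T | Xn n s = u} = σ '' S := by
    apply Set.Subset.antisymm
    · rintro s ⟨hsT, hsu⟩
      have hsV : s ∈ V := by
        by_contra hsV
        have hsK : s ∈ K := ⟨hsT, hsV⟩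
        have hlb := hε₀ s hsK
        have hd := h1 s hsT
        rw [dist_eq_norm, hsu] at hd
        linarith
      obtain ⟨t, htS, hst⟩ := mem_iUnion₂.1 hsV
      exact ⟨t, htS, (huniqn t htS s (ball_subset_closedBall hst) hsu).symm⟩
    · rintro s ⟨t, htS, rfl⟩
      refine ⟨interior_subset (hrT t htS (closedBall_subset_closedBall (hρr t) (hσball t htS))),
        hσroot t htS⟩
  have hσinj : InjOn σ S := by
    intro t ht t' ht' he
    by_contra hne
    have hd := hdisj t ht t' ht' hne
    have hb1 : σ t ∈ closedBall t (ρ t) := hσball t ht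
    have hb2 : σ t ∈ closedBall t' (ρ t') := he ▸ hσball t' ht'
    rw [Set.eq_empty_iff_forall_notMem] at hd
    exact hd (σ t) ⟨hb1, hb2⟩
  rw [himg, Set.ncard_image_of_injOn hσinj]
end

section
/- Let X : [a,b] → R be a random process with a.s. C^1 paths such that p_{X(t)}(v) ≤ C for all t ∈ [a,b] and all v in some neighborhood of u ∈ R. Then P{∃ t ∈ [a,b] : X(t) = u and X'(t) = 0} = 0 (Bulinskaya's lemma). -/
open MeasureTheory Set

/-- Deterministic covering step for Bulinskaya's lemma: if `f` is `C¹` on `[a,b]`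
and has a critical point `t ∈ (a,b)` at level `u`, then for all sufficiently fine
uniform partitions, some partition point is mapped `η·mesh`-close to `u`. -/
lemma bulinskaya_cover (a b : ℝ) (hlt : a < b) (f : ℝ → ℝ)
    (hf : ContDiffOn ℝ 1 f (Set.Icc a b)) (u η : ℝ) (hη : 0 < η)
    (t : ℝ) (ht : t ∈ Set.Ioo a b) (htu : f t = u) (htd : deriv f t = 0) :
    ∃ N : ℕ, ∀ m : ℕ, N ≤ m → ∃ k < m,
      f (a + k * ((b - a) / m)) ∈
        Set.Icc (u - η * ((b - a) / m)) (u + η * ((b - a) / m)) := by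
  set g := derivWithin f (Set.Icc a b) with hg
  have hgc : ContinuousOn g (Set.Icc a b) :=
    hf.continuousOn_derivWithin (uniqueDiffOn_Icc hlt) le_rfl
  have hgu : UniformContinuousOn g (Set.Icc a b) :=
    isCompact_Icc.uniformContinuousOn_of_continuous hgc
  obtain ⟨δ, hδ, hδ'⟩ := Metric.uniformContinuousOn_iff.mp hgu η hη
  obtain ⟨N0, hN0⟩ := exists_nat_gt ((b - a) / δ)
  refine ⟨N0 + 1, fun m hm => ?_⟩
  have hm1 : 1 ≤ m := le_trans (Nat.le_add_left 1 N0) hm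
  have hmpos : (0 : ℝ) < m := by exact_mod_cast Nat.lt_of_lt_of_le Nat.zero_lt_one hm1
  set h := (b - a) / m with hh_def
  have hh : 0 < h := div_pos (by linarith) hmpos
  have hhδ : h < δ := by
    have hNm : ((b - a) / δ : ℝ) < m := by
      calc ((b - a) / δ : ℝ) < N0 := hN0
        _ ≤ m := by exact_mod_cast le_trans (Nat.le_succ N0) hm
    rw [hh_def, div_lt_iff₀ hmpos]
    rw [div_lt_iff₀ hδ] at hNm
    linarith [hNm]
  have hta : 0 ≤ (t - a) / h := div_nonneg (by linarith [ht.1]) hh.le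
  set k := ⌊(t - a) / h⌋₊ with hk_def
  have hk_le : (k : ℝ) ≤ (t - a) / h := Nat.floor_le hta
  have hk1 : (t - a) / h < k + 1 := Nat.lt_floor_add_one _
  have hkm : k < m := by
    rw [hk_def, Nat.floor_lt hta, div_lt_iff₀ hh, hh_def]
    have : (m : ℝ) * ((b - a) / m) = b - a := by field_simp
    rw [this]
    linarith [ht.2]
  set tk := a + k * h with htk_def
  have htk_le : tk ≤ t := by
    rw [htk_def]
    have : (k : ℝ) * h ≤ t - a := by
      rw [← le_div_iff₀ hh]; exact hk_le
    linarith
  have ht_tk : t - tk ≤ h := by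
    rw [htk_def]
    have : t - a < ((k : ℝ) + 1) * h := by
      rw [← div_lt_iff₀ hh]; exact hk1
    nlinarith
  have htk_mem : tk ∈ Set.Icc a b := by
    constructor
    · rw [htk_def]; nlinarith [hk_le, hta, hh.le, (Nat.cast_nonneg k : (0:ℝ) ≤ k)]
    · exact le_trans htk_le ht.2.le
  have hsub : Set.Icc tk t ⊆ Set.Icc a b := Set.Icc_subset_Icc htk_mem.1 ht.2.le
  have hgt : g t = 0 := by
    rw [hg, derivWithin_of_mem_nhds (Icc_mem_nhds ht.1 ht.2)]
    exact htd
  have hder : ∀ x ∈ Set.Icc tk t, HasDerivWithinAt f (g x) (Set.Icc tk t) x := fun x hx =>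
    (((hf.differentiableOn one_ne_zero) x (hsub hx)).hasDerivWithinAt).mono hsub
  have hbound : ∀ x ∈ Set.Ico tk t, ‖g x‖ ≤ η := by
    intro x hx
    have hx' : x ∈ Set.Icc a b := hsub (Set.Ico_subset_Icc_self hx)
    have ht' : t ∈ Set.Icc a b := ⟨ht.1.le, ht.2.le⟩
    have hdist : dist x t < δ := by
      rw [Real.dist_eq, abs_sub_lt_iff]
      constructor <;> [linarith [hx.2]; linarith [hx.1, ht_tk]]
    have := hδ' x hx' t ht' hdist
    rw [hgt, dist_zero_right] at this
    exact this.le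
  have key := norm_image_sub_le_of_norm_deriv_le_segment' hder hbound t
    (Set.right_mem_Icc.2 htk_le)
  rw [htu, Real.norm_eq_abs, abs_sub_comm] at key
  refine ⟨k, hkm, ?_⟩
  have hle : η * (t - tk) ≤ η * h := mul_le_mul_of_nonneg_left ht_tk hη.le
  have habs : |f (a + k * h) - u| ≤ η * h := by
    rw [← htk_def]; exact le_trans key hle
  rw [abs_le] at habs
  exact ⟨by linarith [habs.1], by linarith [habs.2]⟩

/-- Bulinskaya's lemma, one-dimensional: `X : [a,b] → ℝ` a
random process with a.s. `C^1` paths such that the densities of the `X(t)` are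
bounded by a common constant `C` on a neighborhood `V` of `u` (expressed as
`P(X(t) ∈ s) ≤ C · λ(s)` for Borel `s ⊆ V`). Then
`P{∃ t ∈ [a,b] : X(t) = u, X'(t) = 0} = 0`. -/
theorem stmt12 (a b : ℝ) (hab : a ≤ b)
    (Ω : Type*) [MeasureSpace Ω] (P : Measure Ω) [IsProbabilityMeasure P]
    (X : Ω → ℝ → ℝ)
    (hmeas : Measurable fun q : Ω × ℝ => X q.1 q.2)
    (hC1 : ∀ᵐ ω ∂P, ContDiffOn ℝ 1 (X ω) (Set.Icc a b))
    (u C : ℝ) (V : Set ℝ) (hV : V ∈ nhds u)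
    (hdens : ∀ t ∈ Set.Icc a b, ∀ s ⊆ V, MeasurableSet s →
      P {ω | X ω t ∈ s} ≤ ENNReal.ofReal C * volume s) :
    P {ω | ∃ t ∈ Set.Icc a b, X ω t = u ∧ deriv (X ω) t = 0} = 0 := by
  -- a closed interval neighborhood of u inside V
  obtain ⟨r0, hr0, hr0V⟩ : ∃ r > 0, Set.Icc (u - r) (u + r) ⊆ V := by
    obtain ⟨ε, hε, hball⟩ := Metric.mem_nhds_iff.mp hV
    refine ⟨ε / 2, by positivity, fun x hx => hball ?_⟩
    rw [Metric.mem_ball, Real.dist_eq, abs_sub_lt_iff]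
    constructor <;> [linarith [hx.2]; linarith [hx.1]]
  have huV : u ∈ V := mem_of_mem_nhds hV
  -- level sets at fixed times are null
  have hpoint : ∀ t ∈ Set.Icc a b, P {ω | X ω t = u} = 0 := by
    intro t ht
    refine le_antisymm ?_ zero_le
    have := hdens t ht {u} (Set.singleton_subset_iff.2 huV) (measurableSet_singleton u)
    simpa using this
  -- Set of "interior" critical points is null
  set A' := {ω | ∃ t ∈ Set.Ioo a b, X ω t = u ∧ deriv (X ω) t = 0} with hA'_def
  have key : ∀ η : ℝ, 0 < η →
      P A' ≤ ENNReal.ofReal C * ENNReal.ofReal (2 * η * (b - a)) := by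
    intro η hη
    rcases eq_or_lt_of_le hab with heq | hlt
    · have : A' = ∅ := by
        rw [hA'_def]; subst heq; simp
      rw [this]; simp
    obtain ⟨N1, hN1⟩ := exists_nat_gt (η * (b - a) / r0)
    set N1' := N1 + 1 with hN1'_def
    set B : ℕ → Set Ω := fun m =>
      ⋃ k ∈ Finset.range m,
        {ω | X ω (a + k * ((b - a) / m)) ∈
          Set.Icc (u - η * ((b - a) / m)) (u + η * ((b - a) / m))} with hB_def
    have hBbound : ∀ m : ℕ, N1' ≤ m →
        P (B m) ≤ ENNReal.ofReal C * ENNReal.ofReal (2 * η * (b - a)) := by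
      intro m hm
      have hm1 : 1 ≤ m := le_trans (Nat.le_add_left 1 N1) hm
      have hmpos : (0 : ℝ) < m := by exact_mod_cast Nat.lt_of_lt_of_le Nat.zero_lt_one hm1
      set h := (b - a) / m with hh_def
      have hh : 0 < h := div_pos (by linarith) hmpos
      have hηh : η * h ≤ r0 := by
        have hNm : (η * (b - a) / r0 : ℝ) < m := by
          calc (η * (b - a) / r0 : ℝ) < N1 := hN1
            _ ≤ m := by exact_mod_cast le_trans (Nat.le_succ N1) hm
        rw [div_lt_iff₀ hr0] at hNm
        rw [hh_def, mul_div_assoc']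
        rw [div_le_iff₀ hmpos]
        nlinarith
      have hIccV : Set.Icc (u - η * h) (u + η * h) ⊆ V := fun x hx =>
        hr0V ⟨by linarith [hx.1], by linarith [hx.2]⟩
      have hstep : ∀ k : ℕ, k < m →
          P {ω | X ω (a + k * h) ∈ Set.Icc (u - η * h) (u + η * h)} ≤
            ENNReal.ofReal C * ENNReal.ofReal (2 * (η * h)) := by
        intro k hk
        have htk : a + k * h ∈ Set.Icc a b := by
          constructor
          · nlinarith [(Nat.cast_nonneg k : (0:ℝ) ≤ k), hh.le]
          · have hk' : (k : ℝ) ≤ m - 1 := by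
              have : (k : ℝ) + 1 ≤ m := by exact_mod_cast Nat.succ_le_of_lt hk
              linarith
            have : (k : ℝ) * h ≤ (m - 1) * h := mul_le_mul_of_nonneg_right hk' hh.le
            have hmh : (m : ℝ) * h = b - a := by rw [hh_def]; field_simp
            nlinarith
        have := hdens (a + k * h) htk (Set.Icc (u - η * h) (u + η * h)) hIccV measurableSet_Icc
        calc P {ω | X ω (a + k * h) ∈ Set.Icc (u - η * h) (u + η * h)}
            ≤ ENNReal.ofReal C * volume (Set.Icc (u - η * h) (u + η * h)) := this
          _ = ENNReal.ofReal C * ENNReal.ofReal (2 * (η * h)) := by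
              rw [Real.volume_Icc]; congr 1; ring
      calc P (B m) ≤ ∑ k ∈ Finset.range m,
            P {ω | X ω (a + k * ((b - a) / m)) ∈
              Set.Icc (u - η * ((b - a) / m)) (u + η * ((b - a) / m))} := by
            rw [hB_def]; exact measure_biUnion_finset_le _ _
        _ ≤ ∑ _k ∈ Finset.range m, ENNReal.ofReal C * ENNReal.ofReal (2 * (η * h)) :=
            Finset.sum_le_sum fun k hk => hstep k (Finset.mem_range.mp hk)
        _ = (m : ENNReal) * (ENNReal.ofReal C * ENNReal.ofReal (2 * (η * h))) := by
            rw [Finset.sum_const, Finset.card_range]; simp [nsmul_eq_mul]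
        _ = ENNReal.ofReal C * ((m : ENNReal) * ENNReal.ofReal (2 * (η * h))) := by ring
        _ = ENNReal.ofReal C * ENNReal.ofReal (2 * η * (b - a)) := by
            congr 1
            rw [← ENNReal.ofReal_natCast m, ← ENNReal.ofReal_mul (by positivity)]
            congr 1
            rw [hh_def]
            field_simp
    -- covering: a.s. paths with an interior critical point lie in all fine B's
    set G := {ω | ContDiffOn ℝ 1 (X ω) (Set.Icc a b)} with hG_def
    set S : ℕ → Set Ω := fun N => ⋂ (n : ℕ), ⋂ (_ : N ≤ n), B (n + N1') with hS_def
    have hScov : A' ∩ G ⊆ ⋃ N, S N := by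
      rintro ω ⟨⟨t, ht, htu, htd⟩, hωG⟩
      obtain ⟨N, hN⟩ := bulinskaya_cover a b hlt (X ω) hωG u η hη t ht htu htd
      refine Set.mem_iUnion.2 ⟨N, ?_⟩
      rw [hS_def]
      refine Set.mem_iInter.2 fun n => Set.mem_iInter.2 fun hn => ?_
      obtain ⟨k, hkm, hmem⟩ := hN (n + N1') (le_trans hn (Nat.le_add_right n N1'))
      rw [hB_def]
      exact Set.mem_biUnion (Finset.mem_range.2 hkm) hmem
    have hSmono : Monotone S := by
      intro N N' hNN'
      rw [hS_def]
      exact Set.iInter₂_mono' fun n hn => ⟨n, le_trans hNN' hn, subset_rfl⟩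
    have hGc : P Gᶜ = 0 := by
      rw [hG_def]
      exact hC1
    calc P A' ≤ P ((A' ∩ G) ∪ Gᶜ) := measure_mono fun ω hω => by
          by_cases hg : ω ∈ G
          · exact Or.inl ⟨hω, hg⟩
          · exact Or.inr hg
      _ ≤ P (A' ∩ G) + P Gᶜ := measure_union_le _ _
      _ = P (A' ∩ G) := by rw [hGc, add_zero]
      _ ≤ P (⋃ N, S N) := measure_mono hScov
      _ = ⨆ N, P (S N) := hSmono.measure_iUnion
      _ ≤ ENNReal.ofReal C * ENNReal.ofReal (2 * η * (b - a)) := by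
          refine iSup_le fun N => ?_
          have hsub : S N ⊆ B (N + N1') := by
            rw [hS_def]
            exact Set.iInter₂_subset N le_rfl
          exact le_trans (measure_mono hsub) (hBbound _ (Nat.le_add_left N1' N))
  have hA' : P A' = 0 := by
    refine le_antisymm ?_ zero_le
    have hreal : Filter.Tendsto (fun j : ℕ => 2 * (1 / ((j : ℝ) + 1)) * (b - a))
        Filter.atTop (nhds 0) := by
      have h1 : Filter.Tendsto (fun j : ℕ => 1 / ((j : ℝ) + 1)) Filter.atTop (nhds 0) :=
        tendsto_one_div_add_atTop_nhds_zero_nat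
      have := (h1.const_mul 2).mul_const (b - a)
      simpa using this
    have htend : Filter.Tendsto
        (fun j : ℕ => ENNReal.ofReal C * ENNReal.ofReal (2 * (1 / ((j : ℝ) + 1)) * (b - a)))
        Filter.atTop (nhds 0) := by
      have h2 : Filter.Tendsto
          (fun j : ℕ => ENNReal.ofReal (2 * (1 / ((j : ℝ) + 1)) * (b - a)))
          Filter.atTop (nhds 0) := by
        have := ENNReal.tendsto_ofReal hreal
        simpa using this
      have := ENNReal.Tendsto.const_mul (a := ENNReal.ofReal C) h2
        (Or.inr ENNReal.ofReal_ne_top)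
      simpa using this
    exact ge_of_tendsto htend (Filter.Eventually.of_forall fun j =>
      key (1 / ((j : ℝ) + 1)) (by positivity))
  -- assemble
  have hsub : {ω | ∃ t ∈ Set.Icc a b, X ω t = u ∧ deriv (X ω) t = 0} ⊆
      {ω | X ω a = u} ∪ {ω | X ω b = u} ∪ A' := by
    rintro ω ⟨t, ht, htu, htd⟩
    rcases eq_or_lt_of_le ht.1 with h1 | h1
    · exact Or.inl (Or.inl (h1 ▸ htu))
    rcases eq_or_lt_of_le ht.2 with h2 | h2
    · exact Or.inl (Or.inr (h2 ▸ htu))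
    · exact Or.inr ⟨t, ⟨h1, h2⟩, htu, htd⟩
  exact measure_mono_null hsub (measure_union_null
    (measure_union_null (hpoint a ⟨le_rfl, hab⟩) (hpoint b ⟨hab, le_rfl⟩)) hA')
end
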